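/- Let 𝒳 ⊆ ℝ^p be nonempty compact, f : ℝ^p → ℝ^n be L-Lipschitz on 𝒳 with L > 0, and 𝒴 = f(𝒳); assume ∂𝒴 ⊆ f(∂𝒳). Suppose the complement of 𝒳 is r-convex for some r > 0, i.e., for every x ∈ ∂𝒳 there exists x̃ with x ∈ closedBall(x̃, r) ⊆ 𝒳. Let x_1, …, x_M be i.i.d. random variables with common law P_𝒳 satisfying P_𝒳(𝒳) = 1 and the density lower bound P_𝒳(A) ≥ p₀·λ(A) for every measurable A ⊆ 𝒳, where p₀ > 0 and λ is Lebesgue measure on ℝ^p. Let ε > 0, let r⃗ = (r, 0, …, 0) ∈ ℝ^p, set Λ = λ(closedBall(0, ε/(2L)) ∩ closedBall(r⃗, r)), and suppose ∂𝒳 can be covered by N closed balls of radius ε/(2L) centered at points of ∂𝒳. Set y_i = f(x_i) and Ŷ^M = convexHull({y_1, …, y_M}). Then, with probability at least 1 − N·(1 − p₀Λ)^M, both d_H(Ŷ^M, convexHull(𝒴)) ≤ ε and 𝒴 ⊆ Ŷ^M ⊕ closedBall(0, ε) hold. -/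

import Mathlib

open MeasureTheory ProbabilityTheory Metric Filter Pointwise
open scoped RealInnerProductSpace

section GeomAux

variable {p : ℕ}

private lemma norm_sub_smul_sq (e x : EuclideanSpace ℝ (Fin p)) (he : ‖e‖ = 1) (c : ℝ) :
    ‖x - c • e‖ ^ 2 = (⟪x, e⟫ - c) ^ 2 + ‖x - ⟪x, e⟫ • e‖ ^ 2 := by
  have hw : ⟪x - ⟪x, e⟫ • e, e⟫ = 0 := by
    rw [inner_sub_left, real_inner_smul_left, real_inner_self_eq_norm_sq, he]
    ring
  have hdecomp : x - c • e = (x - ⟪x, e⟫ • e) + (⟪x, e⟫ - c) • e := by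
    rw [sub_smul]; abel
  rw [hdecomp, norm_add_sq_real, real_inner_smul_right, hw, norm_smul, he]
  simp [Real.norm_eq_abs, sq_abs]
  ring

private lemma mem_cball_decomp (e : EuclideanSpace ℝ (Fin p)) (he : ‖e‖ = 1) (c R : ℝ)
    (hR : 0 ≤ R) (x : EuclideanSpace ℝ (Fin p)) :
    x ∈ closedBall (c • e) R ↔ (⟪x, e⟫ - c) ^ 2 + ‖x - ⟪x, e⟫ • e‖ ^ 2 ≤ R ^ 2 := by
  rw [mem_closedBall, dist_eq_norm, ← norm_sub_smul_sq e x he c]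
  constructor <;> intro h <;> nlinarith [norm_nonneg (x - c • e)]

private lemma mem_cball_zero_decomp (e : EuclideanSpace ℝ (Fin p)) (he : ‖e‖ = 1) (R : ℝ)
    (hR : 0 ≤ R) (x : EuclideanSpace ℝ (Fin p)) :
    x ∈ closedBall (0 : EuclideanSpace ℝ (Fin p)) R ↔
      ⟪x, e⟫ ^ 2 + ‖x - ⟪x, e⟫ • e‖ ^ 2 ≤ R ^ 2 := by
  have := mem_cball_decomp e he 0 R hR x
  simpa using this

end GeomAux

section Lens
variable {p : ℕ}

private lemma lens_mono (i₀ : Fin p) {δ r d : ℝ} (hδ : 0 ≤ δ) (hr : 0 ≤ r) (hd : 0 ≤ d)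
    (hdr : d ≤ r) :
    volume (closedBall (0 : EuclideanSpace ℝ (Fin p)) δ ∩
      closedBall (r • EuclideanSpace.single i₀ (1:ℝ)) r) ≤
    volume (closedBall (0 : EuclideanSpace ℝ (Fin p)) δ ∩
      closedBall (d • EuclideanSpace.single i₀ (1:ℝ)) r) := by
  set e : EuclideanSpace ℝ (Fin p) := EuclideanSpace.single i₀ (1:ℝ) with he_def
  have he : ‖e‖ = 1 := by simp [he_def]
  set m : ℝ := (r + d) / 2 with hm_def
  set R : EuclideanSpace ℝ (Fin p) ≃ₗᵢ[ℝ] EuclideanSpace ℝ (Fin p) := Submodule.reflection (ℝ ∙ e)ᗮ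
    with hR_def
  have hRapply : ∀ x : EuclideanSpace ℝ (Fin p), R x = x - (2 * ⟪x, e⟫) • e := by
    intro x
    rw [hR_def, Submodule.reflection_orthogonal_apply, Submodule.reflection_singleton_apply, he]
    rw [real_inner_comm e x]
    push_cast
    module
  set σ : EuclideanSpace ℝ (Fin p) → EuclideanSpace ℝ (Fin p) :=
    fun x => ((r + d) • e) + (x - (2 * ⟪x, e⟫) • e) with hσ_def
  have hσeq : σ = (fun y => ((r + d) • e) + y) ∘ R := by
    funext x; simp [hσ_def, hRapply]
  have hσmp : MeasurePreserving σ volume volume := by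
    rw [hσeq]
    exact (measurePreserving_add_left volume _).comp R.measurePreserving
  have hσ1 : ∀ x, ⟪σ x, e⟫ = (r + d) - ⟪x, e⟫ := by
    intro x
    show ⟪(r + d) • e + (x - (2 * ⟪x, e⟫) • e), e⟫ = (r + d) - ⟪x, e⟫
    rw [inner_add_left, inner_sub_left, real_inner_smul_left, real_inner_smul_left,
      real_inner_self_eq_norm_sq, he]
    ring
  have hσw : ∀ x, σ x - ⟪σ x, e⟫ • e = x - ⟪x, e⟫ • e := by
    intro x
    rw [hσ1]
    simp only [hσ_def]
    module
  have hσinv : ∀ x, σ (σ x) = x := by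
    intro x
    have h1 := hσ1 x
    simp only [hσ_def] at h1 ⊢
    rw [h1]
    module
  -- membership characterizations
  have hb0 : ∀ x : EuclideanSpace ℝ (Fin p), x ∈ closedBall (0 : EuclideanSpace ℝ (Fin p)) δ ↔
      ⟪x, e⟫ ^ 2 + ‖x - ⟪x, e⟫ • e‖ ^ 2 ≤ δ ^ 2 := mem_cball_zero_decomp e he δ hδ
  have hbc : ∀ (c : ℝ) (x : EuclideanSpace ℝ (Fin p)), x ∈ closedBall (c • e) r ↔
      (⟪x, e⟫ - c) ^ 2 + ‖x - ⟪x, e⟫ • e‖ ^ 2 ≤ r ^ 2 := fun c => mem_cball_decomp e he c r hr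
  set Kr : Set (EuclideanSpace ℝ (Fin p)) := closedBall 0 δ ∩ closedBall (r • e) r with hKr_def
  set Kd : Set (EuclideanSpace ℝ (Fin p)) := closedBall 0 δ ∩ closedBall (d • e) r with hKd_def
  have hinner_cont : Continuous fun x : EuclideanSpace ℝ (Fin p) => ⟪x, e⟫ :=
    continuous_id.inner continuous_const
  have hKd_meas : MeasurableSet Kd := measurableSet_closedBall.inter measurableSet_closedBall
  have hKr_meas : MeasurableSet Kr := measurableSet_closedBall.inter measurableSet_closedBall
  have hlt_meas : MeasurableSet {x : EuclideanSpace ℝ (Fin p) | ⟪x, e⟫ < m} :=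
    measurableSet_lt hinner_cont.measurable measurable_const
  have hle_meas : MeasurableSet {x : EuclideanSpace ℝ (Fin p) | m ≤ ⟪x, e⟫} :=
    measurableSet_le measurable_const hinner_cont.measurable
  set A : Set (EuclideanSpace ℝ (Fin p)) := Kr ∩ {x | ⟪x, e⟫ < m} with hA_def
  set B : Set (EuclideanSpace ℝ (Fin p)) := Kr ∩ {x | m ≤ ⟪x, e⟫} with hB_def
  have hB_meas : MeasurableSet B := hKr_meas.inter hle_meas
  have hAB : A ∪ B = Kr := by
    rw [hA_def, hB_def, ← Set.inter_union_distrib_left]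
    have : {x : EuclideanSpace ℝ (Fin p) | ⟪x, e⟫ < m} ∪ {x | m ≤ ⟪x, e⟫} = Set.univ := by
      ext x; simp [lt_or_ge]
    rw [this, Set.inter_univ]
  have hdisj : Disjoint A B := by
    rw [Set.disjoint_left]
    rintro x ⟨-, hA2⟩ ⟨-, hB2⟩
    simp only [Set.mem_setOf_eq] at hA2 hB2
    linarith
  have himg : σ '' B = σ ⁻¹' B := congrFun (Set.image_eq_preimage_of_inverse hσinv hσinv) B
  have hσB_meas : MeasurableSet (σ '' B) := by
    rw [himg]; exact hB_meas.preimage hσmp.measurable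
  -- inclusions
  have hI1 : A ⊆ Kd ∩ {x | ⟪x, e⟫ ≤ m} := by
    rintro x ⟨⟨hx0, hxr⟩, hxm⟩
    rw [hb0] at hx0
    rw [hbc] at hxr
    have hxm' : ⟪x, e⟫ < m := hxm
    refine ⟨⟨(hb0 x).mpr hx0, (hbc d x).mpr ?_⟩, le_of_lt hxm'⟩
    rw [hm_def] at hxm'
    nlinarith [hx0, hxr, hxm', hd, hdr]
  have hI2 : σ '' B ⊆ Kd ∩ {x | ⟪x, e⟫ ≤ m} := by
    rintro _ ⟨x, ⟨⟨hx0, hxr⟩, hxm⟩, rfl⟩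
    rw [hb0] at hx0
    rw [hbc] at hxr
    have hxm' : m ≤ ⟪x, e⟫ := hxm
    rw [hm_def] at hxm'
    refine ⟨⟨(hb0 (σ x)).mpr ?_, (hbc d (σ x)).mpr ?_⟩, ?_⟩
    · rw [hσw, hσ1]
      nlinarith [hx0, hxm', hd, hr]
    · rw [hσw, hσ1]
      nlinarith [hxr]
    · show ⟪σ x, e⟫ ≤ m
      rw [hσ1, hm_def]
      linarith
  have hI3 : A ∩ σ '' B ⊆ σ ⁻¹' (Kd ∩ {x | m < ⟪x, e⟫}) := by
    rintro x ⟨⟨⟨hx0, hxr⟩, hxm⟩, x', hx'B, hx'eq⟩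
    have hσx : σ x = x' := by rw [← hx'eq, hσinv]
    refine Set.mem_preimage.mpr ?_
    rw [hσx]
    obtain ⟨⟨hx'0, hx'r⟩, _⟩ := hx'B
    have hxm' : ⟪x, e⟫ < m := hxm
    rw [hm_def] at hxm'
    have ht' : ⟪x', e⟫ = (r + d) - ⟪x, e⟫ := by rw [← hσx, hσ1]
    have hw' : x' - ⟪x', e⟫ • e = x - ⟪x, e⟫ • e := by rw [← hσx, hσw]
    rw [hbc] at hxr
    refine ⟨⟨hx'0, (hbc d x').mpr ?_⟩, ?_⟩
    · rw [hw', ht']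
      nlinarith [hxr]
    · show m < ⟪x', e⟫
      rw [ht', hm_def]
      linarith
  -- measure computation
  have hKd_split : Kd ∩ {x | ⟪x, e⟫ ≤ m} ∪ Kd ∩ {x | m < ⟪x, e⟫} = Kd := by
    rw [← Set.inter_union_distrib_left]
    have : {x : EuclideanSpace ℝ (Fin p) | ⟪x, e⟫ ≤ m} ∪ {x | m < ⟪x, e⟫} = Set.univ := by
      ext x; simp [le_or_gt]
    rw [this, Set.inter_univ]
  have hKd_disj : Disjoint (Kd ∩ {x | ⟪x, e⟫ ≤ m}) (Kd ∩ {x | m < ⟪x, e⟫}) := by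
    rw [Set.disjoint_left]
    rintro x ⟨-, h1⟩ ⟨-, h2⟩
    simp only [Set.mem_setOf_eq] at h1 h2
    linarith
  have hgt_meas : MeasurableSet {x : EuclideanSpace ℝ (Fin p) | m < ⟪x, e⟫} :=
    measurableSet_lt measurable_const hinner_cont.measurable
  calc volume Kr = volume A + volume B := by
        rw [← hAB, measure_union hdisj hB_meas]
    _ = volume A + volume (σ '' B) := by
        rw [himg, hσmp.measure_preimage hB_meas.nullMeasurableSet]
    _ = volume (A ∪ σ '' B) + volume (A ∩ σ '' B) := by
        rw [measure_union_add_inter A hσB_meas]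
    _ ≤ volume (Kd ∩ {x | ⟪x, e⟫ ≤ m}) + volume (σ ⁻¹' (Kd ∩ {x | m < ⟪x, e⟫})) :=
        add_le_add (measure_mono (Set.union_subset hI1 hI2)) (measure_mono hI3)
    _ = volume (Kd ∩ {x | ⟪x, e⟫ ≤ m}) + volume (Kd ∩ {x | m < ⟪x, e⟫}) := by
        rw [hσmp.measure_preimage (hKd_meas.inter hgt_meas).nullMeasurableSet]
    _ = volume Kd := by
        rw [← measure_union hKd_disj (hKd_meas.inter hgt_meas), hKd_split]

end Lens

section Rot
variable {p : ℕ}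

private lemma lens_le_inter (i₀ : Fin p) {δ r : ℝ} (hδ : 0 ≤ δ) (hr : 0 ≤ r)
    (a c : EuclideanSpace ℝ (Fin p)) (hc : dist a c ≤ r) :
    volume (closedBall (0 : EuclideanSpace ℝ (Fin p)) δ ∩
      closedBall (EuclideanSpace.single i₀ r) r) ≤
    volume (closedBall a δ ∩ closedBall c r) := by
  set e : EuclideanSpace ℝ (Fin p) := EuclideanSpace.single i₀ (1:ℝ) with he_def
  have hsingle : EuclideanSpace.single i₀ r = r • e := by
    rw [he_def]
    ext j
    by_cases h : j = i₀ <;> simp [EuclideanSpace.single_apply, h]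
  set d : ℝ := ‖c - a‖ with hd_def
  have hd0 : 0 ≤ d := norm_nonneg _
  have hdr : d ≤ r := by
    rw [hd_def, ← dist_eq_norm, dist_comm]
    exact hc
  -- rotation
  set g : EuclideanSpace ℝ (Fin p) ≃ₗᵢ[ℝ] EuclideanSpace ℝ (Fin p) :=
    Submodule.reflection (ℝ ∙ ((d • e) - (c - a)))ᗮ with hg_def
  have hg : g (d • e) = c - a := by
    apply Submodule.reflection_sub
    rw [norm_smul, he_def, EuclideanSpace.norm_single, norm_one, mul_one, Real.norm_eq_abs,
      abs_of_nonneg hd0, hd_def]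
  have hgpre : g ⁻¹' (closedBall 0 δ ∩ closedBall (c - a) r) =
      closedBall (0 : EuclideanSpace ℝ (Fin p)) δ ∩ closedBall (d • e) r := by
    ext y
    simp only [Set.mem_preimage, Set.mem_inter_iff, mem_closedBall]
    have h0 : dist (g y) 0 = dist y 0 := by
      conv_lhs => rw [show (0 : EuclideanSpace ℝ (Fin p)) = g 0 by simp]
      rw [g.dist_map]
    have h1 : dist (g y) (c - a) = dist y (d • e) := by
      conv_lhs => rw [← hg]
      rw [g.dist_map]
    rw [h0, h1]
  have htrans : MeasurePreserving (fun y : EuclideanSpace ℝ (Fin p) => a + y) volume volume :=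
    measurePreserving_add_left volume a
  have hpre : (fun y : EuclideanSpace ℝ (Fin p) => a + y) ⁻¹' (closedBall a δ ∩ closedBall c r) =
      closedBall 0 δ ∩ closedBall (c - a) r := by
    ext y
    simp only [Set.mem_preimage, Set.mem_inter_iff, mem_closedBall, dist_eq_norm]
    rw [show a + y - a = y - 0 by abel, show a + y - c = y - (c - a) by abel]
  have hmeas1 : MeasurableSet
      (closedBall (0 : EuclideanSpace ℝ (Fin p)) δ ∩ closedBall (c - a) r) :=
    measurableSet_closedBall.inter measurableSet_closedBall
  have hmeas2 : MeasurableSet (closedBall a δ ∩ closedBall c r) :=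
    measurableSet_closedBall.inter measurableSet_closedBall
  calc volume (closedBall (0 : EuclideanSpace ℝ (Fin p)) δ ∩
        closedBall (EuclideanSpace.single i₀ r) r)
      = volume (closedBall (0 : EuclideanSpace ℝ (Fin p)) δ ∩ closedBall (r • e) r) := by
        rw [hsingle]
    _ ≤ volume (closedBall (0 : EuclideanSpace ℝ (Fin p)) δ ∩ closedBall (d • e) r) :=
        lens_mono i₀ hδ hr hd0 hdr
    _ = volume (g ⁻¹' (closedBall 0 δ ∩ closedBall (c - a) r)) := by rw [hgpre]
    _ = volume (closedBall (0 : EuclideanSpace ℝ (Fin p)) δ ∩ closedBall (c - a) r) :=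
        g.measurePreserving.measure_preimage hmeas1.nullMeasurableSet
    _ = volume ((fun y : EuclideanSpace ℝ (Fin p) => a + y) ⁻¹'
          (closedBall a δ ∩ closedBall c r)) := by
        rw [hpre]
    _ = volume (closedBall a δ ∩ closedBall c r) :=
        htrans.measure_preimage hmeas2.nullMeasurableSet

end Rot

section Det

private lemma deterministic_approx {p n M N : ℕ}
    (𝒳 : Set (EuclideanSpace ℝ (Fin p))) (h𝒳c : IsCompact 𝒳)
    (f : EuclideanSpace ℝ (Fin p) → EuclideanSpace ℝ (Fin n))
    (L : ℝ) (hL : 0 < L)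
    (hf : ∀ x₁ ∈ 𝒳, ∀ x₂ ∈ 𝒳, ‖f x₁ - f x₂‖ ≤ L * ‖x₁ - x₂‖)
    (hbd : frontier (f '' 𝒳) ⊆ f '' frontier 𝒳)
    (ε : ℝ) (hε : 0 < ε)
    (a : Fin N → EuclideanSpace ℝ (Fin p))
    (hcov : frontier 𝒳 ⊆ ⋃ i, closedBall (a i) (ε / (2 * L)))
    (hNne : Nonempty (Fin N))
    (y : Fin M → EuclideanSpace ℝ (Fin p)) (hy : ∀ j, y j ∈ 𝒳)
    (hhit : ∀ i, ∃ j, y j ∈ closedBall (a i) (ε / (2 * L))) :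
    hausdorffDist (convexHull ℝ (Set.range fun j => f (y j))) (convexHull ℝ (f '' 𝒳)) ≤ ε ∧
      f '' 𝒳 ⊆ convexHull ℝ (Set.range fun j => f (y j)) +
        closedBall (0 : EuclideanSpace ℝ (Fin n)) ε := by
  have hM : Nonempty (Fin M) := by
    obtain ⟨i⟩ := hNne
    obtain ⟨j, -⟩ := hhit i
    exact ⟨j⟩
  set s : Set (EuclideanSpace ℝ (Fin n)) := Set.range fun j => f (y j) with hs_def
  have hsne : s.Nonempty := Set.range_nonempty _
  have hs𝒴 : s ⊆ f '' 𝒳 := by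
    rintro - ⟨j, rfl⟩
    exact Set.mem_image_of_mem f (hy j)
  set Y : Set (EuclideanSpace ℝ (Fin n)) := convexHull ℝ s with hY_def
  have hYcomp : IsCompact Y := (Set.finite_range _).isCompact_convexHull ℝ
  have hYne : Y.Nonempty := hsne.convexHull
  set C : Set (EuclideanSpace ℝ (Fin n)) :=
    Y + closedBall (0 : EuclideanSpace ℝ (Fin n)) ε with hC_def
  have hCconv : Convex ℝ C := (convex_convexHull ℝ s).add (convex_closedBall _ _)
  have hCcomp : IsCompact C := hYcomp.add (isCompact_closedBall _ _)
  have hCclosed : IsClosed C := hCcomp.isClosed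
  -- continuity of f on 𝒳 and compactness of the image
  have hfc : ContinuousOn f 𝒳 := by
    have hlip : LipschitzOnWith (Real.toNNReal L) f 𝒳 := by
      apply LipschitzOnWith.of_dist_le_mul
      intro z hz w hw
      rw [dist_eq_norm, dist_eq_norm, Real.coe_toNNReal L hL.le]
      exact hf z hz w hw
    exact hlip.continuousOn
  have h𝒴comp : IsCompact (f '' 𝒳) := h𝒳c.image_of_continuousOn hfc
  -- frontier of the image is within ε of the samples
  have hfrC : frontier (f '' 𝒳) ⊆ C := by
    intro z hz
    obtain ⟨x', hx'fr, rfl⟩ := hbd hz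
    obtain ⟨i, hi⟩ := Set.mem_iUnion.mp (hcov hx'fr)
    obtain ⟨j, hj⟩ := hhit i
    have hx'𝒳 : x' ∈ 𝒳 := h𝒳c.isClosed.frontier_subset hx'fr
    have hdist : ‖x' - y j‖ ≤ 2 * (ε / (2 * L)) := by
      have h1 : dist x' (y j) ≤ dist x' (a i) + dist (a i) (y j) := dist_triangle _ _ _
      have h2 : dist x' (a i) ≤ ε / (2 * L) := mem_closedBall.mp hi
      have h3 : dist (a i) (y j) ≤ ε / (2 * L) := by
        rw [dist_comm]; exact mem_closedBall.mp hj
      rw [← dist_eq_norm]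
      linarith
    have hnorm : ‖f x' - f (y j)‖ ≤ ε := by
      have := hf x' hx'𝒳 (y j) (hy j)
      have hLd : L * ‖x' - y j‖ ≤ L * (2 * (ε / (2 * L))) :=
        mul_le_mul_of_nonneg_left hdist hL.le
      have heq : L * (2 * (ε / (2 * L))) = ε := by field_simp
      linarith
    have hfyY : f (y j) ∈ Y := subset_convexHull ℝ s ⟨j, rfl⟩
    have : f x' = f (y j) + (f x' - f (y j)) := by abel
    rw [hC_def, this]
    exact Set.add_mem_add hfyY (mem_closedBall_zero_iff.mpr hnorm)
  -- the whole image is inside C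
  have h𝒴C : f '' 𝒳 ⊆ C := by
    intro y₀ hy₀
    by_contra hy₀C
    obtain ⟨c, hcY⟩ := hYne
    have hcC : c ∈ C := by
      rw [hC_def, show c = c + 0 by abel]
      exact Set.add_mem_add hcY (mem_closedBall_self hε.le)
    set u : EuclideanSpace ℝ (Fin n) := y₀ - c with hu_def
    have hu : u ≠ 0 := by
      rw [hu_def, sub_ne_zero]
      rintro rfl
      exact hy₀C hcC
    have hu0 : 0 < ‖u‖ := norm_pos_iff.mpr hu
    set S : Set ℝ := {t : ℝ | c + t • u ∈ f '' 𝒳} with hS_def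
    have h1S : (1 : ℝ) ∈ S := by
      simp only [hS_def, Set.mem_setOf_eq, one_smul]
      rw [show c + u = y₀ by rw [hu_def]; abel]
      exact hy₀
    obtain ⟨Rb, hRb⟩ := h𝒴comp.isBounded.subset_closedBall c
    have hSbdd : BddAbove S := by
      refine ⟨Rb / ‖u‖, fun t ht => ?_⟩
      have h1 : c + t • u ∈ closedBall c Rb := hRb ht
      have h2 : dist (c + t • u) c = |t| * ‖u‖ := by
        rw [dist_eq_norm, show c + t • u - c = t • u by abel, norm_smul, Real.norm_eq_abs]
      have h3 : |t| * ‖u‖ ≤ Rb := by rw [← h2]; exact mem_closedBall.mp h1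
      have h4 : t ≤ |t| := le_abs_self t
      calc t ≤ |t| := h4
        _ = |t| * ‖u‖ / ‖u‖ := by field_simp
        _ ≤ Rb / ‖u‖ := (div_le_div_iff_of_pos_right hu0).mpr h3
    have hSclosed : IsClosed S := by
      have hcont : Continuous fun t : ℝ => c + t • u :=
        continuous_const.add (continuous_id.smul continuous_const)
      exact IsClosed.preimage hcont h𝒴comp.isClosed
    set T : ℝ := sSup S with hT_def
    have hTS : T ∈ S := hSclosed.csSup_mem ⟨1, h1S⟩ hSbdd
    have hT1 : (1 : ℝ) ≤ T := le_csSup hSbdd h1S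
    have hT0 : 0 < T := lt_of_lt_of_le one_pos hT1
    set z : EuclideanSpace ℝ (Fin n) := c + T • u with hz_def
    have hz𝒴 : z ∈ f '' 𝒳 := hTS
    have hzfr : z ∈ frontier (f '' 𝒳) := by
      constructor
      · exact subset_closure hz𝒴
      · intro hint
        obtain ⟨η, hη, hball⟩ := Metric.mem_nhds_iff.mp (mem_interior_iff_mem_nhds.mp hint)
        set t' : ℝ := T + η / (2 * ‖u‖) with ht'_def
        have hqpos : 0 < η / (2 * ‖u‖) := by positivity
        have hmem : c + t' • u ∈ ball z η := by
          rw [mem_ball, dist_eq_norm]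
          rw [show c + t' • u - z = (η / (2 * ‖u‖)) • u by
            rw [hz_def, ht'_def, add_smul]; abel]
          rw [norm_smul, Real.norm_eq_abs, abs_of_pos hqpos]
          rw [show η / (2 * ‖u‖) * ‖u‖ = η / 2 by field_simp]
          linarith
        have ht'S : t' ∈ S := hball hmem
        have hle : t' ≤ T := le_csSup hSbdd ht'S
        have hlt : T < t' := by rw [ht'_def]; linarith
        linarith
    have hzC : z ∈ C := hfrC hzfr
    have hy₀mem : y₀ ∈ C := by
      have hcomb := hCconv hcC hzC (a := 1 - 1 / T) (b := 1 / T)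
        (by
          have : 1 / T ≤ 1 := by
            rw [div_le_one hT0]; exact hT1
          linarith)
        (by positivity)
        (by ring)
      have heq : (1 - 1 / T) • c + (1 / T) • z = y₀ := by
        rw [hz_def, smul_add, smul_smul, one_div_mul_cancel hT0.ne', one_smul, hu_def]
        module
      rw [heq] at hcomb
      exact hcomb
    exact hy₀C hy₀mem
  -- conclusion
  have hconvC : convexHull ℝ (f '' 𝒳) ⊆ C := convexHull_min h𝒴C hCconv
  have hYsub : Y ⊆ convexHull ℝ (f '' 𝒳) := convexHull_mono hs𝒴
  constructor
  · apply hausdorffDist_le_of_infDist hε.le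
    · intro w hw
      have : w ∈ convexHull ℝ (f '' 𝒳) := hYsub hw
      rw [infDist_zero_of_mem this]
      exact hε.le
    · intro w hw
      obtain ⟨w₁, hw₁, v, hv, rfl⟩ := Set.mem_add.mp (hconvC hw)
      calc infDist (w₁ + v) Y ≤ dist (w₁ + v) w₁ := infDist_le_dist_of_mem hw₁
        _ = ‖v‖ := by rw [dist_eq_norm]; simp
        _ ≤ ε := mem_closedBall_zero_iff.mp hv
  · exact h𝒴C

end Det


/-- **Corollary: finite-sample bound for smooth input sets and continuous densities.**
If the complement of `𝒳` is `r`-convex and the sampling law has a density lower bound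
`p₀·λ`, then with probability at least `1 - N·(1 - p₀Λ)^M` (with
`Λ = λ(closedBall 0 (ε/(2L)) ∩ closedBall r⃗ r)`), both the Hausdorff bound
`d_H(Ŷ^M, convexHull 𝒴) ≤ ε` and the outer approximation `𝒴 ⊆ Ŷ^M ⊕ closedBall 0 ε` hold. -/
theorem randup_finite_sample_rconvex {p n M N : ℕ} (hp : 0 < p)
    (𝒳 : Set (EuclideanSpace ℝ (Fin p))) (h𝒳ne : 𝒳.Nonempty) (h𝒳c : IsCompact 𝒳)
    (f : EuclideanSpace ℝ (Fin p) → EuclideanSpace ℝ (Fin n))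
    (L : ℝ) (hL : 0 < L)
    (hf : ∀ x₁ ∈ 𝒳, ∀ x₂ ∈ 𝒳, ‖f x₁ - f x₂‖ ≤ L * ‖x₁ - x₂‖)
    (hbd : frontier (f '' 𝒳) ⊆ f '' frontier 𝒳)
    (r : ℝ) (hr : 0 < r)
    (hrconv : ∀ x' ∈ frontier 𝒳, ∃ xt,
      x' ∈ Metric.closedBall xt r ∧ Metric.closedBall xt r ⊆ 𝒳)
    {Ω : Type*} [MeasureSpace Ω] [IsProbabilityMeasure (ℙ : Measure Ω)]
    (x : Fin M → Ω → EuclideanSpace ℝ (Fin p)) (hxmeas : ∀ i, Measurable (x i))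
    (P𝒳 : Measure (EuclideanSpace ℝ (Fin p))) [IsProbabilityMeasure P𝒳]
    (hlaw : ∀ i, Measure.map (x i) ℙ = P𝒳)
    (hindep : iIndepFun x ℙ)
    (hsupp : P𝒳 𝒳 = 1)
    (p₀ : ℝ) (hp₀ : 0 < p₀)
    (hdens : ∀ A ⊆ 𝒳, MeasurableSet A → ENNReal.ofReal p₀ * volume A ≤ P𝒳 A)
    (ε : ℝ) (hε : 0 < ε)
    (rvec : EuclideanSpace ℝ (Fin p)) (hrvec : rvec = EuclideanSpace.single (⟨0, hp⟩ : Fin p) r)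
    (Λ : ℝ)
    (hΛ : Λ = (volume (Metric.closedBall (0 : EuclideanSpace ℝ (Fin p)) (ε / (2 * L)) ∩
        Metric.closedBall rvec r)).toReal)
    (a : Fin N → EuclideanSpace ℝ (Fin p)) (ha : ∀ i, a i ∈ frontier 𝒳)
    (hcov : frontier 𝒳 ⊆ ⋃ i, Metric.closedBall (a i) (ε / (2 * L))) :
    ENNReal.ofReal (1 - N * (1 - p₀ * Λ) ^ M) ≤
      ℙ {ω | Metric.hausdorffDist
            (convexHull ℝ (Set.range fun i => f (x i ω)))
            (convexHull ℝ (f '' 𝒳)) ≤ ε ∧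
          f '' 𝒳 ⊆ convexHull ℝ (Set.range fun i => f (x i ω)) +
            Metric.closedBall (0 : EuclideanSpace ℝ (Fin n)) ε} := by
  classical
  set δ : ℝ := ε / (2 * L) with hδ_def
  have hδpos : 0 < δ := by rw [hδ_def]; positivity
  haveI : Nontrivial (EuclideanSpace ℝ (Fin p)) := by
    refine ⟨⟨EuclideanSpace.single (⟨0, hp⟩ : Fin p) (1:ℝ), 0, fun h => ?_⟩⟩
    have h1 : ‖EuclideanSpace.single (⟨0, hp⟩ : Fin p) (1:ℝ)‖ = 1 := by simp
    rw [h] at h1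
    simp at h1
  have hfrne : (frontier 𝒳).Nonempty := by
    rw [Set.nonempty_iff_ne_empty]
    intro h
    have hclopen : IsClopen 𝒳 := isClopen_iff_frontier_eq_empty.mpr h
    rcases isClopen_iff.mp hclopen with h1 | h1
    · exact h𝒳ne.ne_empty h1
    · exact IsCompact.ne_univ h𝒳c h1
  have hNne : Nonempty (Fin N) := by
    obtain ⟨x', hx'⟩ := hfrne
    obtain ⟨i, -⟩ := Set.mem_iUnion.mp (hcov hx')
    exact ⟨i⟩
  have hΛ0 : 0 ≤ Λ := hΛ ▸ ENNReal.toReal_nonneg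
  have hkey : ∀ i : Fin N, ENNReal.ofReal (p₀ * Λ) ≤ P𝒳 (closedBall (a i) δ) := by
    intro i
    obtain ⟨xt, hxt1, hxt2⟩ := hrconv (a i) (ha i)
    have hdist : dist (a i) xt ≤ r := mem_closedBall.mp hxt1
    have hsub𝒳 : closedBall (a i) δ ∩ closedBall xt r ⊆ 𝒳 := fun z hz => hxt2 hz.2
    have hvol := lens_le_inter (⟨0, hp⟩ : Fin p) hδpos.le hr.le (a i) xt hdist
    rw [← hrvec] at hvol
    have hfin : volume (closedBall (0 : EuclideanSpace ℝ (Fin p)) δ ∩ closedBall rvec r) ≠ ⊤ :=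
      ((measure_mono Set.inter_subset_left).trans_lt measure_closedBall_lt_top).ne
    have hΛvol : ENNReal.ofReal Λ =
        volume (closedBall (0 : EuclideanSpace ℝ (Fin p)) δ ∩ closedBall rvec r) := by
      rw [hΛ, ENNReal.ofReal_toReal hfin]
    calc ENNReal.ofReal (p₀ * Λ) = ENNReal.ofReal p₀ * ENNReal.ofReal Λ :=
        ENNReal.ofReal_mul hp₀.le
      _ = ENNReal.ofReal p₀ *
          volume (closedBall (0 : EuclideanSpace ℝ (Fin p)) δ ∩ closedBall rvec r) := by
          rw [hΛvol]
      _ ≤ ENNReal.ofReal p₀ * volume (closedBall (a i) δ ∩ closedBall xt r) :=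
          mul_le_mul_right hvol _
      _ ≤ P𝒳 (closedBall (a i) δ ∩ closedBall xt r) :=
          hdens _ hsub𝒳 (measurableSet_closedBall.inter measurableSet_closedBall)
      _ ≤ P𝒳 (closedBall (a i) δ) := measure_mono Set.inter_subset_left
  have hp₀Λle1 : p₀ * Λ ≤ 1 := by
    obtain ⟨i⟩ := hNne
    have h1 := (hkey i).trans (prob_le_one)
    rw [← ENNReal.ofReal_one] at h1
    exact (ENNReal.ofReal_le_ofReal_iff zero_le_one).mp h1
  set t : ℝ := 1 - p₀ * Λ with ht_def
  have ht0 : 0 ≤ t := by rw [ht_def]; linarith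
  set Bad : Fin N → Set Ω := fun i => ⋂ j, (x j) ⁻¹' (closedBall (a i) δ)ᶜ with hBad_def
  have hBadprob : ∀ i, ℙ (Bad i) ≤ ENNReal.ofReal (t ^ M) := by
    intro i
    have hprod := hindep.meas_iInter (s := fun j => (x j) ⁻¹' (closedBall (a i) δ)ᶜ)
      (fun j => ⟨(closedBall (a i) δ)ᶜ, measurableSet_closedBall.compl, rfl⟩)
    rw [hBad_def]
    simp only []
    rw [hprod]
    have hone : ∀ j : Fin M, ℙ ((x j) ⁻¹' (closedBall (a i) δ)ᶜ) ≤ ENNReal.ofReal t := by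
      intro j
      rw [← Measure.map_apply (hxmeas j) measurableSet_closedBall.compl, hlaw j,
        prob_compl_eq_one_sub measurableSet_closedBall, ht_def,
        ENNReal.ofReal_sub _ (by positivity), ENNReal.ofReal_one]
      exact tsub_le_tsub_left (hkey i) 1
    calc ∏ j, ℙ ((x j) ⁻¹' (closedBall (a i) δ)ᶜ) ≤ ∏ _j : Fin M, ENNReal.ofReal t :=
        Finset.prod_le_prod' (fun j _ => hone j)
      _ = ENNReal.ofReal t ^ M := by rw [Finset.prod_const, Finset.card_univ, Fintype.card_fin]
      _ = ENNReal.ofReal (t ^ M) := (ENNReal.ofReal_pow ht0 M).symm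
  set BadX : Set Ω := ⋃ j, (x j) ⁻¹' 𝒳ᶜ with hBadX_def
  have hBadXnull : ℙ BadX = 0 := by
    rw [hBadX_def]
    apply measure_iUnion_null
    intro j
    rw [← Measure.map_apply (hxmeas j) h𝒳c.measurableSet.compl, hlaw j,
      prob_compl_eq_one_sub h𝒳c.measurableSet, hsupp, tsub_self]
  set bad : Set Ω := (⋃ i, Bad i) ∪ BadX with hbad_def
  have hbadprob : ℙ bad ≤ ENNReal.ofReal (↑N * t ^ M) := by
    calc ℙ bad ≤ ℙ (⋃ i, Bad i) + ℙ BadX := measure_union_le _ _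
      _ = ℙ (⋃ i, Bad i) := by rw [hBadXnull, add_zero]
      _ ≤ ∑ i, ℙ (Bad i) := measure_iUnion_fintype_le _ _
      _ ≤ ∑ _i : Fin N, ENNReal.ofReal (t ^ M) := Finset.sum_le_sum fun i _ => hBadprob i
      _ = ↑N * ENNReal.ofReal (t ^ M) := by
          rw [Finset.sum_const, Finset.card_univ, Fintype.card_fin, nsmul_eq_mul]
      _ = ENNReal.ofReal (↑N * t ^ M) := by
          rw [ENNReal.ofReal_mul (Nat.cast_nonneg N), ENNReal.ofReal_natCast]
  set goodSet : Set Ω := {ω | Metric.hausdorffDist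
        (convexHull ℝ (Set.range fun i => f (x i ω)))
        (convexHull ℝ (f '' 𝒳)) ≤ ε ∧
      f '' 𝒳 ⊆ convexHull ℝ (Set.range fun i => f (x i ω)) +
        Metric.closedBall (0 : EuclideanSpace ℝ (Fin n)) ε} with hgood_def
  have hgood : ∀ ω, ω ∉ bad → ω ∈ goodSet := by
    intro ω hω
    rw [hbad_def, Set.mem_union, not_or] at hω
    obtain ⟨hA', hX'⟩ := hω
    have hA2 : ∀ i, ω ∉ Bad i := fun i hmem => hA' (Set.mem_iUnion.mpr ⟨i, hmem⟩)
    have hhit : ∀ i, ∃ j, x j ω ∈ closedBall (a i) δ := by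
      intro i
      by_contra hcon
      push_neg at hcon
      exact hA2 i (Set.mem_iInter.mpr fun j =>
        Set.mem_preimage.mpr (Set.mem_compl (hcon j)))
    have hy𝒳 : ∀ j, x j ω ∈ 𝒳 := by
      intro j
      by_contra hcon
      exact hX' (Set.mem_iUnion.mpr ⟨j, Set.mem_preimage.mpr (Set.mem_compl hcon)⟩)
    exact deterministic_approx 𝒳 h𝒳c f L hL hf hbd ε hε a hcov hNne
      (fun j => x j ω) hy𝒳 hhit
  have huniv : (Set.univ : Set Ω) ⊆ goodSet ∪ bad := by
    intro ω _
    by_cases hω : ω ∈ bad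
    · exact Or.inr hω
    · exact Or.inl (hgood ω hω)
  have honele : (1 : ENNReal) ≤ ℙ goodSet + ℙ bad := by
    calc (1 : ENNReal) = ℙ (Set.univ : Set Ω) := measure_univ.symm
      _ ≤ ℙ (goodSet ∪ bad) := measure_mono huniv
      _ ≤ ℙ goodSet + ℙ bad := measure_union_le _ _
  calc ENNReal.ofReal (1 - ↑N * (1 - p₀ * Λ) ^ M)
      = 1 - ENNReal.ofReal (↑N * t ^ M) := by
        rw [← ht_def, ENNReal.ofReal_sub _
          (mul_nonneg (Nat.cast_nonneg N) (pow_nonneg ht0 M)), ENNReal.ofReal_one]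
    _ ≤ 1 - ℙ bad := tsub_le_tsub_left hbadprob 1
    _ ≤ ℙ goodSet := by rw [tsub_le_iff_right]; exact honele
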